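/- Let J be an arbitrary index type and let a : J × {1,…,n} → ℝ be given coupling coefficients. Say a nonempty subset S ⊆ {1,…,n} admits a decoherence-free sign vector if there exists w : S → {−1,1} with ∑_{i∈S} w_i a_{j,i} = 0 for all j ∈ J. Suppose that no subset S with 1 ≤ |S| < n admits a decoherence-free sign vector. Then for any two distinct sign vectors z, z' : {1,…,n} → {−1,1} satisfying ∑_{i=1}^n z_i a_{j,i} = ∑_{i=1}^n z'_i a_{j,i} for all j ∈ J, one has z' = −z (i.e., z'_i = −z_i for every i), and moreover ∑_{i=1}^n z_i a_{j,i} = 0 for all j ∈ J. -/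
import Mathlib


/-- Paper: Appendix, 'One DFS for minimal sized sensor networks'.
Let `a : J × Fin n → ℝ` be coupling coefficients. A nonempty subset
`S ⊆ {1,…,n}` admits a decoherence-free sign vector if there is `w` with values
`±1` on `S` and `∑_{i∈S} w i · a j i = 0` for all `j`. If no subset of size
`1 ≤ |S| < n` admits a decoherence-free sign vector, then any two distinct sign
vectors `z, z'` with equal couplings `∑_i z i · a j i = ∑_i z' i · a j i` for
all `j` satisfy `z' = −z`, and moreover `∑_i z i · a j i = 0` for all `j`. -/
theorem minimal_sensor_network_unique_dfs
    (n : ℕ) {J : Type*} (a : J → Fin n → ℝ)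
    (hmin : ∀ S : Finset (Fin n), 1 ≤ S.card → S.card < n →
      ¬ ∃ w : Fin n → ℝ, (∀ i ∈ S, w i = 1 ∨ w i = -1) ∧
        ∀ j, ∑ i ∈ S, w i * a j i = 0)
    (z z' : Fin n → ℝ)
    (hz : ∀ i, z i = 1 ∨ z i = -1) (hz' : ∀ i, z' i = 1 ∨ z' i = -1)
    (hne : z ≠ z')
    (hcoup : ∀ j, ∑ i, z i * a j i = ∑ i, z' i * a j i) :
    (∀ i, z' i = - z i) ∧ (∀ j, ∑ i, z i * a j i = 0) := by
  classical
  set S : Finset (Fin n) := Finset.univ.filter (fun i => z i ≠ z' i) with hS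
  have hmemS : ∀ i, i ∈ S ↔ z i ≠ z' i := by
    intro i; simp [hS]
  -- w i = (z i - z' i)/2 is ±1 on S
  have hw : ∀ i ∈ S, (z i - z' i) / 2 = 1 ∨ (z i - z' i) / 2 = -1 := by
    intro i hi
    have hne' : z i ≠ z' i := (hmemS i).1 hi
    rcases hz i with h1 | h1 <;> rcases hz' i with h2 | h2 <;>
      simp [h1, h2] at hne' ⊢ <;> norm_num
  -- sum over S equals half the difference of couplings = 0
  have hsum : ∀ j, ∑ i ∈ S, ((z i - z' i) / 2) * a j i = 0 := by
    intro j
    have h0 : ∑ i, ((z i - z' i) / 2) * a j i = 0 := by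
      have := hcoup j
      have : ∑ i, (z i * a j i - z' i * a j i) = 0 := by
        rw [Finset.sum_sub_distrib]; linarith [hcoup j]
      calc ∑ i, ((z i - z' i) / 2) * a j i
          = (∑ i, (z i * a j i - z' i * a j i)) / 2 := by
            rw [Finset.sum_div]; congr 1; ext i; ring
        _ = 0 := by rw [this]; norm_num
    rw [← h0]
    apply Finset.sum_subset (Finset.subset_univ S)
    intro i _ hiS
    have : z i = z' i := by
      by_contra h; exact hiS ((hmemS i).2 h)
    rw [this]; ring
  have hScard : ¬ (1 ≤ S.card ∧ S.card < n) := by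
    rintro ⟨h1, h2⟩
    exact hmin S h1 h2 ⟨fun i => (z i - z' i) / 2, hw, hsum⟩
  have hSne : S.Nonempty := by
    rcases Function.ne_iff.mp hne with ⟨i, hi⟩
    exact ⟨i, (hmemS i).2 hi⟩
  have h1 : 1 ≤ S.card := Finset.card_pos.mpr hSne
  have h2 : ¬ S.card < n := fun h => hScard ⟨h1, h⟩
  have hSuniv : S = Finset.univ := by
    apply Finset.eq_univ_of_card
    rw [Fintype.card_fin]
    have hc : S.card ≤ n := by
      simpa using Finset.card_le_card (Finset.subset_univ S)
    omega
  have hneg : ∀ i, z' i = - z i := by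
    intro i
    have hi : z i ≠ z' i := (hmemS i).1 (hSuniv ▸ Finset.mem_univ i)
    rcases hz i with h1' | h1' <;> rcases hz' i with h2' | h2' <;>
      simp [h1', h2'] at hi ⊢
  refine ⟨hneg, fun j => ?_⟩
  have := hcoup j
  have h0 : ∑ i, z' i * a j i = - ∑ i, z i * a j i := by
    rw [← Finset.sum_neg_distrib]
    congr 1; ext i; rw [hneg i]; ring
  linarith
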